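/- For every Fréchet space Y with dim Y > 0, the space B_1(ℝ, Y) of Baire-one functions from ℝ (with its usual topology) to Y, with the topology of pointwise convergence, is not a Baire space. -/

import Mathlib

open Set Filter Topology Ordinal TopologicalSpace

/-- A map `φ : K → M` is *almost open* if the image of every nonempty open set
has nonempty interior. -/
def AlmostOpenMap {K M : Type*} [TopologicalSpace K] [TopologicalSpace M] (φ : K → M) : Prop :=
  ∀ V : Set K, IsOpen V → V.Nonempty → (interior (φ '' V)).Nonempty

/-- The Baire class `B_α(X,Y)`: `B_0(X,Y)` is the set of continuous functions, and for `α > 0`,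
`B_α(X,Y)` is the set of pointwise limits of sequences from `C(X,Y) ∪ ⋃_{β<α} B_β(X,Y)`. -/
noncomputable def BaireClass (X Y : Type*) [TopologicalSpace X] [TopologicalSpace Y]
    (α : Ordinal.{0}) : Set (X → Y) :=
  if α = 0 then {f | Continuous f}
  else {f | ∃ g : ℕ → X → Y,
    (∀ n, Continuous (g n) ∨ ∃ β, ∃ _ : β < α, g n ∈ BaireClass X Y β) ∧
    ∀ x, Filter.Tendsto (fun n => g n x) Filter.atTop (nhds (f x))}
termination_by α

/-- `B_α(X,Y)` for `0 ≤ α ≤ ω₁`, where `B_{ω₁}(X,Y) = ⋃_{β<ω₁} B_β(X,Y)`. -/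
noncomputable def BaireFun (X Y : Type*) [TopologicalSpace X] [TopologicalSpace Y]
    (α : Ordinal.{0}) : Set (X → Y) :=
  if α = ω_ 1 then ⋃ β ∈ Set.Iio (ω_ 1 : Ordinal.{0}), BaireClass X Y β
  else BaireClass X Y α

/-- A (real) Fréchet space: a completely metrizable locally convex topological
vector space over `ℝ`. -/
def IsFrechetTVS (Y : Type*) [AddCommGroup Y] [Module ℝ Y] [t : TopologicalSpace Y] : Prop :=
  IsTopologicalAddGroup Y ∧ ContinuousSMul ℝ Y ∧ LocallyConvexSpace ℝ Y ∧
  ∃ m : MetricSpace Y, m.toPseudoMetricSpace.toUniformSpace.toTopologicalSpace = t ∧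
    @CompleteSpace Y m.toPseudoMetricSpace.toUniformSpace
theorem mem_BC1 {X Z : Type*} [TopologicalSpace X] [TopologicalSpace Z] {f : X → Z} :
    f ∈ BaireClass X Z 1 ↔ ∃ g : ℕ → X → Z, (∀ n, Continuous (g n)) ∧
      ∀ x, Tendsto (fun n => g n x) atTop (𝓝 (f x)) := by
  rw [BaireClass]
  simp only [if_neg one_ne_zero, mem_setOf_eq]
  constructor
  · rintro ⟨g, hg, hlim⟩
    refine ⟨g, fun n => ?_, hlim⟩
    rcases hg n with h | ⟨β, hβ, hmem⟩
    · exact h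
    · rw [Ordinal.lt_one_iff_zero] at hβ
      subst hβ
      rw [BaireClass, if_pos rfl] at hmem
      exact hmem
  · rintro ⟨g, hg, hlim⟩
    exact ⟨g, fun n => Or.inl (hg n), hlim⟩

theorem statement11 (Y : Type*) [AddCommGroup Y] [Module ℝ Y] [TopologicalSpace Y]
    (hY : IsFrechetTVS Y) (hnt : Nontrivial Y) :
    ¬ BaireSpace ↥(BaireClass ℝ Y 1) := by
  obtain ⟨hTAG, hSMul, hLCS, m, hm, -⟩ := hY
  haveI := hTAG; haveI := hSMul; haveI := hLCS
  -- `Y` is T1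
  have ht1 : @T1Space Y m.toPseudoMetricSpace.toUniformSpace.toTopologicalSpace := by
    letI := m; infer_instance
  haveI : T1Space Y := hm ▸ ht1
  -- find a continuous seminorm `p` and `e` with `1 ≤ p e`
  obtain ⟨e, he⟩ := exists_ne (0 : Y)
  obtain ⟨U, ⟨hU0, hUopen, hUbal, hUconv⟩, hUe⟩ :=
    (nhds_hasBasis_absConvex_open ℝ Y).mem_iff.mp (compl_singleton_mem_nhds (Ne.symm he))
  have hUnhds : U ∈ 𝓝 (0 : Y) := hUopen.mem_nhds hU0
  have habs : Absorbent ℝ U := absorbent_nhds_zero hUnhds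
  set p : Seminorm ℝ Y := gaugeSeminorm hUbal hUconv habs with hp
  have hpe : 1 ≤ p e :=
    one_le_gauge_of_notMem (hUconv.starConvex hU0) (habs e) (fun h => hUe h rfl)
  have hpc : Continuous p := continuous_gauge hUconv hUnhds
  -- the subtype
  set B : Set (ℝ → Y) := BaireClass ℝ Y 1 with hB
  have h0B : (fun _ : ℝ => (0 : Y)) ∈ B := by
    rw [hB, mem_BC1]
    exact ⟨fun _ _ => 0, fun _ => continuous_const, fun x => tendsto_const_nhds⟩
  haveI : Nonempty ↥B := ⟨⟨_, h0B⟩⟩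
  intro hBaire
  -- the closed cover
  set S : ℚ × ℚ × ℕ → Set ↥B := fun q =>
    if (q.1 : ℝ) < (q.2.1 : ℝ) then
      {f : ↥B | ∀ x ∈ Icc (q.1 : ℝ) (q.2.1 : ℝ), p (f.1 x) ≤ q.2.2}
    else ∅ with hS
  have hSclosed : ∀ q, IsClosed (S q) := by
    intro q
    rw [hS]
    dsimp only
    split_ifs with h
    · have : {f : ↥B | ∀ x ∈ Icc (q.1 : ℝ) (q.2.1 : ℝ), p (f.1 x) ≤ q.2.2} =
          ⋂ x ∈ Icc (q.1 : ℝ) (q.2.1 : ℝ), {f : ↥B | p (f.1 x) ≤ q.2.2} := by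
        ext f; simp
      rw [this]
      exact isClosed_biInter fun x _ =>
        isClosed_le (hpc.comp ((continuous_apply x).comp continuous_subtype_val))
          continuous_const
    · exact isClosed_empty
  have hScover : ⋃ q, S q = Set.univ := by
    rw [Set.eq_univ_iff_forall]
    intro f
    obtain ⟨g, hg, hlim⟩ := mem_BC1.mp f.2
    -- closed cover of ℝ
    set E : ℕ → Set ℝ := fun k =>
      ⋂ (n : ℕ) (j : ℕ), {x : ℝ | p (g (n + k) x - g (j + k) x) ≤ 1} with hE
    have hEclosed : ∀ k, IsClosed (E k) :=
      fun k => isClosed_iInter fun n => isClosed_iInter fun j =>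
        isClosed_le (hpc.comp ((hg _).sub (hg _))) continuous_const
    have hEcover : ⋃ k, E k = Set.univ := by
      rw [Set.eq_univ_iff_forall]
      intro x
      have hhalf : Tendsto (fun n => p (g n x - f.1 x)) atTop (𝓝 0) := by
        have : Tendsto (fun y => p (y - f.1 x)) (𝓝 (f.1 x)) (𝓝 (p (f.1 x - f.1 x))) :=
          (hpc.comp (continuous_id.sub continuous_const)).continuousAt
        simpa [Function.comp_def] using this.comp (hlim x)
      obtain ⟨k, hk⟩ := (hhalf.eventually_lt_const (by norm_num : (0:ℝ) < 1/2)).exists_forall_of_atTop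
      refine mem_iUnion.mpr ⟨k, ?_⟩
      simp only [hE, mem_iInter, mem_setOf_eq]
      intro n j
      have h1 : p (g (n + k) x - f.1 x) < 1/2 := hk _ (Nat.le_add_left _ _)
      have h2 : p (g (j + k) x - f.1 x) < 1/2 := hk _ (Nat.le_add_left _ _)
      calc p (g (n + k) x - g (j + k) x)
          = p ((g (n + k) x - f.1 x) - (g (j + k) x - f.1 x)) := by congr 1; abel
        _ ≤ p (g (n + k) x - f.1 x) + p (g (j + k) x - f.1 x) := map_sub_le_add p _ _
        _ ≤ 1 := by linarith
    obtain ⟨k, x₀, hx₀⟩ := nonempty_interior_of_iUnion_of_closed hEclosed hEcover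
    rw [mem_interior_iff_mem_nhds, Metric.mem_nhds_iff] at hx₀
    obtain ⟨ε, hε, hball⟩ := hx₀
    obtain ⟨a, ha1, ha2⟩ := exists_rat_btwn (show x₀ - ε < x₀ by linarith)
    obtain ⟨b, hb1, hb2⟩ := exists_rat_btwn (show x₀ < x₀ + ε by linarith)
    have hab : (a : ℝ) < b := lt_trans ha2 hb1
    have hIcc : Icc (a : ℝ) (b : ℝ) ⊆ E k := by
      intro x hx
      apply hball
      rw [Real.ball_eq_Ioo]
      exact ⟨lt_of_lt_of_le ha1 hx.1, lt_of_le_of_lt hx.2 hb2⟩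
    -- `p (f x - g k x) ≤ 1` on `Icc a b`
    have hclose : ∀ x ∈ Icc (a : ℝ) (b : ℝ), p (f.1 x - g k x) ≤ 1 := by
      intro x hx
      have hxE := hIcc hx
      simp only [hE, mem_iInter, mem_setOf_eq] at hxE
      have hten : Tendsto (fun j => p (g (j + k) x - g k x)) atTop (𝓝 (p (f.1 x - g k x))) := by
        have hc : Tendsto (fun y => p (y - g k x)) (𝓝 (f.1 x)) (𝓝 (p (f.1 x - g k x))) :=
          (hpc.comp (continuous_id.sub continuous_const)).continuousAt
        exact hc.comp ((hlim x).comp (tendsto_add_atTop_nat k))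
      refine le_of_tendsto hten (Eventually.of_forall fun j => ?_)
      simpa using hxE j 0
    -- `p ∘ g k` is bounded on the compact `Icc a b`
    obtain ⟨z, hz, hzmax⟩ := isCompact_Icc.exists_isMaxOn (nonempty_Icc.mpr hab.le)
      ((hpc.comp (hg k)).continuousOn)
    set M : ℕ := ⌈p (g k z) + 1⌉₊ with hM
    refine mem_iUnion.mpr ⟨(a, b, M), ?_⟩
    rw [hS]
    simp only [if_pos hab, mem_setOf_eq]
    intro x hx
    calc p (f.1 x) = p ((f.1 x - g k x) + g k x) := by congr 1; abel
      _ ≤ p (f.1 x - g k x) + p (g k x) := map_add_le_add p _ _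
      _ ≤ 1 + p (g k z) := add_le_add (hclose x hx) (hzmax hx)
      _ ≤ M := by rw [hM]; have := Nat.le_ceil (p (g k z) + 1); linarith
  -- some member of the cover has nonempty interior
  obtain ⟨⟨a, b, M⟩, f₀, hf₀⟩ := nonempty_interior_of_iUnion_of_closed hSclosed hScover
  -- necessarily `a < b`
  by_cases hab : (a : ℝ) < (b : ℝ)
  swap
  · rw [hS] at hf₀
    simp only [if_neg hab, interior_empty] at hf₀
    exact hf₀
  -- extract a basic open neighborhood
  have hf₀S : f₀ ∈ S (a, b, M) := interior_subset hf₀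
  obtain ⟨V, hVopen, hVeq⟩ := isOpen_induced_iff.mp (isOpen_interior (s := S (a, b, M)))
  have hf₀V : f₀.1 ∈ V := by rw [← hVeq] at hf₀; exact hf₀
  obtain ⟨I, u, hu, hpi⟩ := isOpen_pi_iff.mp hVopen f₀.1 hf₀V
  -- pick a point of `Icc a b` avoiding `I`
  obtain ⟨x₁, hx₁Icc, hx₁I⟩ := (Set.Icc_infinite hab).exists_notMem_finset I
  -- the perturbed function
  set c : ℝ := M + 1 + p (f₀.1 x₁) with hc
  have hc0 : 0 ≤ c := by positivity
  set h : ℝ → Y := fun x => f₀.1 x + (if x = x₁ then c • e else 0) with hh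
  have hhB : h ∈ B := by
    obtain ⟨g, hg, hlim⟩ := mem_BC1.mp f₀.2
    rw [hB, mem_BC1]
    refine ⟨fun n x => g n x + (max 0 (1 - n * |x - x₁|)) • (c • e), fun n => ?_, fun x => ?_⟩
    · exact (hg n).add ((continuous_const.max
        (continuous_const.sub (continuous_const.mul
          ((continuous_id.sub continuous_const).abs)))).smul continuous_const)
    · refine Tendsto.add (hlim x) ?_
      by_cases hx : x = x₁
      · rw [if_pos hx, hx]
        have heq : (fun n : ℕ => (max 0 (1 - (n : ℝ) * |x₁ - x₁|)) • (c • e)) =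
            fun _ => c • e := by
          funext n; norm_num
        rw [heq]
        exact tendsto_const_nhds
      · simp only [if_neg hx]
        have habs0 : 0 < |x - x₁| := abs_pos.mpr (sub_ne_zero.mpr hx)
        have hev : (fun n : ℕ => (max 0 (1 - (n : ℝ) * |x - x₁|)) • (c • e)) =ᶠ[atTop]
            (fun _ => (0 : Y)) := by
          filter_upwards [eventually_ge_atTop ⌈1 / |x - x₁|⌉₊] with n hn
          have h1 : 1 / |x - x₁| ≤ n := le_trans (Nat.le_ceil _) (by exact_mod_cast hn)
          have h2 : 1 ≤ (n : ℝ) * |x - x₁| := by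
            rw [div_le_iff₀ habs0] at h1; linarith
          show (max 0 (1 - (n : ℝ) * |x - x₁|)) • (c • e) = 0
          rw [max_eq_left (by linarith), zero_smul]
        exact Tendsto.congr' hev.symm tendsto_const_nhds
  -- `h` lies in the neighborhood, hence in `S (a,b,M)`
  have hhV : (⟨h, hhB⟩ : ↥B) ∈ interior (S (a, b, M)) := by
    rw [← hVeq]
    show h ∈ V
    apply hpi
    rw [Set.mem_pi]
    intro x hxI
    have hxne : x ≠ x₁ := fun hxe => hx₁I (by simpa [hxe] using hxI)
    have hfx : h x = f₀.1 x := by rw [hh]; simp [if_neg hxne]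
    rw [hfx]
    exact (hu x hxI).2
  -- contradiction at `x₁`
  have hhS : (⟨h, hhB⟩ : ↥B) ∈ S (a, b, M) := interior_subset hhV
  rw [hS] at hhS
  simp only [if_pos hab, mem_setOf_eq] at hhS
  have hbound : p (h x₁) ≤ M := hhS x₁ hx₁Icc
  have hval : h x₁ = f₀.1 x₁ + c • e := by rw [hh]; simp
  have hlarge : (M : ℝ) + 1 ≤ p (h x₁) := by
    have h1 : p (c • e) = c * p e := by
      rw [map_smul_eq_mul, Real.norm_eq_abs, abs_of_nonneg hc0]
    have h2 : c ≤ c * p e := le_mul_of_one_le_right hc0 hpe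
    have h3 : p (c • e) ≤ p (h x₁) + p (f₀.1 x₁) := by
      have : c • e = h x₁ - f₀.1 x₁ := by rw [hval]; abel
      rw [this]
      exact map_sub_le_add p _ _
    rw [h1] at h3
    have hceq : c = (M : ℝ) + 1 + p (f₀.1 x₁) := hc
    linarith
  linarith
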